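/- Let η = diag(1,−1,−1,−1), let u ∈ ℝ⁴ satisfy η_{μν}u^μu^ν = 1, let ψ ∈ ℝ⁴ be a covector, and let E, c², ζ, τ be real constants. Set B = u^μ ψ_μ, Δ^{αμ} = η^{αμ} − u^α u^μ, V^α = Δ^{αμ} ψ_μ, and V² = η_{αβ} V^α V^β. Consider the 6×6 real matrix A with: A₁₁ = B; A₁,(1+ν) = E ψ_ν for ν = 0,…,3; A₁₆ = 0; A_{(1+α),1} = −c² Δ^{αμ}ψ_μ; A_{(1+α),(1+ν)} = E δ^α_ν B; A_{(1+α),6} = −Δ^{αμ}ψ_μ for α, ν = 0,…,3; A₆₁ = 0; A₆,(1+ν) = ζ ψ_ν; A₆₆ = τ B. Then det A = E³ B⁴ { τ E B² + [τ c² E + ζ] V² }. -/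

import Mathlib

open scoped BigOperators

/-- The Minkowski metric `η = diag(1,-1,-1,-1)` on `ℝ⁴`. -/
noncomputable def minkowskiEta : Matrix (Fin 4) (Fin 4) ℝ :=
  Matrix.diagonal ![1, -1, -1, -1]

lemma minkowskiEta_eq :
    minkowskiEta = !![1,0,0,0; 0,-1,0,0; 0,0,-1,0; 0,0,0,-1] := by
  unfold minkowskiEta
  ext i j
  fin_cases i <;> fin_cases j <;>
    simp [Matrix.diagonal, Matrix.vecHead, Matrix.vecTail]

lemma csA : Fin.castSucc (2 : Fin 3) = (2 : Fin 4) := rfl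
lemma csB : Fin.castSucc (2 : Fin 4) = (2 : Fin 5) := rfl
lemma csC : Fin.castSucc (2 : Fin 5) = (2 : Fin 6) := rfl

set_option maxRecDepth 20000 in
set_option maxHeartbeats 2000000 in
/-- The characteristic determinant of the Müller–Israel–Stewart equations
with bulk viscous pressure only.  With `u` a unit timelike vector, `ψ` a covector,
`B = u^μψ_μ`, `V^α = (η^{αμ} − u^αu^μ)ψ_μ`, `V² = η_{αβ}V^αV^β`, the 6×6 characteristic
matrix `A` (rows: energy equation, four momentum equations, bulk relaxation equation)
satisfies `det A = E³ B⁴ (τ E B² + (τ c² E + ζ) V²)`. -/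
theorem MIS_bulk_characteristic_determinant (u ψ : Fin 4 → ℝ)
    (hu : ∑ μ, ∑ ν, minkowskiEta μ ν * u μ * u ν = 1)
    (E c2 ζ τ : ℝ)
    (B : ℝ) (hB : B = ∑ μ, u μ * ψ μ)
    (V : Fin 4 → ℝ) (hV : ∀ a, V a = ∑ μ, (minkowskiEta a μ - u a * u μ) * ψ μ)
    (V2 : ℝ) (hV2 : V2 = ∑ a, ∑ b, minkowskiEta a b * V a * V b)
    (A : Matrix (Fin 6) (Fin 6) ℝ)
    (hA : A = Matrix.of ![
      ![B,          E * ψ 0, E * ψ 1, E * ψ 2, E * ψ 3, 0],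
      ![-c2 * V 0,  E * B,   0,       0,       0,       -V 0],
      ![-c2 * V 1,  0,       E * B,   0,       0,       -V 1],
      ![-c2 * V 2,  0,       0,       E * B,   0,       -V 2],
      ![-c2 * V 3,  0,       0,       0,       E * B,   -V 3],
      ![0,          ζ * ψ 0, ζ * ψ 1, ζ * ψ 2, ζ * ψ 3, τ * B]]) :
    A.det = E ^ 3 * B ^ 4 * (τ * E * B ^ 2 + (τ * c2 * E + ζ) * V2) := by
  have h0 := hV 0
  have h1 := hV 1
  have h2 := hV 2
  have h3 := hV 3
  simp only [minkowskiEta_eq, Fin.sum_univ_four, Matrix.cons_val_zero, Matrix.cons_val_one,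
    Matrix.head_cons, Matrix.cons_val_two, Matrix.tail_cons, Matrix.cons_val_three,
    Matrix.cons_val', Matrix.of_apply, Matrix.cons_val_fin_one, Matrix.empty_val',
    Matrix.head_fin_const] at hu hV2 h0 h1 h2 h3
  have hS : V2 = ψ 0 * V 0 + ψ 1 * V 1 + ψ 2 * V 2 + ψ 3 * V 3 := by
    rw [hV2, h0, h1, h2, h3]
    linear_combination (u 0 * ψ 0 + u 1 * ψ 1 + u 2 * ψ 2 + u 3 * ψ 3) ^ 2 * hu
  subst hA
  rw [hS]
  simp [Matrix.det_succ_row_zero, Fin.sum_univ_succ, Fin.succAbove, csA, csB, csC,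
    Matrix.vecHead, Matrix.vecTail]
  ring
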